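/- arXiv:2301.12841 — 2 statements merged into one kernel-verified Lean document; each statement's English description precedes it below -/
import Mathlib

section
/- Let q be an odd prime power, let d ≥ 5, let 𝓔 ⊆ F_q^d be a finite set, and let r ∈ F_q. Let C denote the set of tuples (x_1, ..., x_5, y_1, ..., y_5) ∈ P_4(r) such that x_1, ..., x_5 are pairwise distinct and y_1, ..., y_5 are pairwise distinct. Then |C| ≥ |P_4(r)| − 10·|𝓔|·|P_3(r)| − 2·|𝓔|^5·|P_1(r)| − |𝓔|^2·|P_2(r)|. -/
/-- `norm2 x = x₁² + ⋯ + x_d²` for `x ∈ F_q^d`. -/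
def norm2 {F : Type*} [Field F] {d : ℕ} (x : Fin d → F) : F := ∑ i, x i ^ 2

/-- `𝓔` contains a pair of `k`-stars with dilation ratio `r`: there are distinct
`x₁, …, x_{k+1} ∈ 𝓔` and distinct `y₁, …, y_{k+1} ∈ 𝓔` with
`‖y_i − y₁‖ = r‖x_i − x₁‖ ≠ 0` for `i = 2, …, k+1`. -/
def ContainsPairOfStars {F : Type*} [Field F] {d : ℕ}
    (𝓔 : Finset (Fin d → F)) (k : ℕ) (r : F) : Prop :=
  ∃ x y : Fin (k + 1) → (Fin d → F),
    Function.Injective x ∧ Function.Injective y ∧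
    (∀ i, x i ∈ 𝓔) ∧ (∀ i, y i ∈ 𝓔) ∧
    ∀ i : Fin (k + 1), i ≠ 0 →
      norm2 (y i - y 0) = r * norm2 (x i - x 0) ∧ r * norm2 (x i - x 0) ≠ 0

/-- `𝓔` contains a pair of `k`-paths with dilation ratio `r`: there are distinct
`x₁, …, x_{k+1} ∈ 𝓔` and distinct `y₁, …, y_{k+1} ∈ 𝓔` with
`‖y_{i+1} − y_i‖ = r‖x_{i+1} − x_i‖ ≠ 0` for `i = 1, …, k`. -/
def ContainsPairOfPaths {F : Type*} [Field F] {d : ℕ}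
    (𝓔 : Finset (Fin d → F)) (k : ℕ) (r : F) : Prop :=
  ∃ x y : Fin (k + 1) → (Fin d → F),
    Function.Injective x ∧ Function.Injective y ∧
    (∀ i, x i ∈ 𝓔) ∧ (∀ i, y i ∈ 𝓔) ∧
    ∀ i : Fin k,
      norm2 (y i.succ - y i.castSucc) = r * norm2 (x i.succ - x i.castSucc) ∧
      r * norm2 (x i.succ - x i.castSucc) ≠ 0

open scoped Classical

/-- `P_k(r)`: tuples `(x₁, …, x_{k+1}, y₁, …, y_{k+1}) ∈ 𝓔^{2k+2}` with
`‖y_{i+1} − y_i‖ = r‖x_{i+1} − x_i‖ ≠ 0` for all `i = 1, …, k`. -/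

noncomputable def Pset {F : Type*} [Field F] [Fintype F] {d : ℕ}
    (𝓔 : Finset (Fin d → F)) (k : ℕ) (r : F) :
    Finset ((Fin (k + 1) → Fin d → F) × (Fin (k + 1) → Fin d → F)) :=
  Finset.univ.filter fun p =>
    (∀ i, p.1 i ∈ 𝓔) ∧ (∀ i, p.2 i ∈ 𝓔) ∧
    ∀ i : Fin k,
      norm2 (p.2 i.succ - p.2 i.castSucc) = r * norm2 (p.1 i.succ - p.1 i.castSucc) ∧
      r * norm2 (p.1 i.succ - p.1 i.castSucc) ≠ 0

section Aux

open Finset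

variable {F : Type*} [Field F] [Fintype F] {d : ℕ}

private lemma mem_Pset {𝓔 : Finset (Fin d → F)} {k : ℕ} {r : F} {p} :
    p ∈ Pset 𝓔 k r ↔ (∀ i, p.1 i ∈ 𝓔) ∧ (∀ i, p.2 i ∈ 𝓔) ∧
    ∀ i : Fin k, norm2 (p.2 i.succ - p.2 i.castSucc) = r * norm2 (p.1 i.succ - p.1 i.castSucc) ∧
      r * norm2 (p.1 i.succ - p.1 i.castSucc) ≠ 0 := by
  simp [Pset]

private lemma consec_x {𝓔 : Finset (Fin d → F)} {r : F} {p} (hp : p ∈ Pset 𝓔 4 r) (i : Fin 4) :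
    p.1 i.castSucc ≠ p.1 i.succ := by
  intro h
  exact ((mem_Pset.mp hp).2.2 i).2 (by rw [h, sub_self]; simp [norm2])

private lemma consec_y {𝓔 : Finset (Fin d → F)} {r : F} {p} (hp : p ∈ Pset 𝓔 4 r) (i : Fin 4) :
    p.2 i.castSucc ≠ p.2 i.succ := by
  intro h
  have h1 := ((mem_Pset.mp hp).2.2 i).1
  exact ((mem_Pset.mp hp).2.2 i).2 (by rw [← h1, h, sub_self]; simp [norm2])

private lemma collision_cases {α : Type*} (f : Fin 5 → α) (hne : ¬Function.Injective f)
    (h01 : f 0 ≠ f 1) (h12 : f 1 ≠ f 2) (h23 : f 2 ≠ f 3) (h34 : f 3 ≠ f 4) :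
    f 0 = f 2 ∨ f 0 = f 3 ∨ f 0 = f 4 ∨ f 1 = f 3 ∨ f 1 = f 4 ∨ f 2 = f 4 := by
  rw [Function.not_injective_iff] at hne
  obtain ⟨a, b, hab, hne⟩ := hne
  fin_cases a <;> fin_cases b <;> simp_all

private lemma card_last_x (𝓔 : Finset (Fin d → F)) (r : F) (a : Fin 5) (ha : a.val < 4) :
    ((Pset 𝓔 4 r).filter fun p => p.1 a = p.1 4).card
      ≤ (Pset 𝓔 3 r).card * 𝓔.card := by
  have key := Finset.card_le_card_of_injOn
    (f := fun p : (Fin 5 → Fin d → F) × (Fin 5 → Fin d → F) =>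
      (((fun i : Fin 4 => p.1 i.castSucc, fun i : Fin 4 => p.2 i.castSucc) :
        (Fin 4 → Fin d → F) × (Fin 4 → Fin d → F)), p.2 4))
    (s := (Pset 𝓔 4 r).filter fun p => p.1 a = p.1 4)
    (t := (Pset 𝓔 3 r) ×ˢ 𝓔) ?_ ?_
  · simpa [Finset.card_product] using key
  · intro p hp
    simp only [mem_coe, mem_filter, mem_Pset] at hp
    obtain ⟨⟨hx, hy, hcond⟩, hab⟩ := hp
    refine Finset.mem_product.mpr ⟨mem_Pset.mpr ⟨fun i => hx _, fun i => hy _, fun i => ?_⟩, hy _⟩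
    simpa only [Fin.succ_castSucc] using hcond i.castSucc
  · intro p hp q hq h
    simp only [mem_coe, mem_filter] at hp hq
    simp only [Prod.mk.injEq] at h
    obtain ⟨⟨h1, h2⟩, h3⟩ := h
    have hlt : ∀ i : Fin 5, i.val < 4 → p.1 i = q.1 i ∧ p.2 i = q.2 i := by
      intro i hi
      constructor
      · have := congrFun h1 ⟨i.val, hi⟩
        simpa [Fin.castSucc, Fin.castAdd, Fin.castLE] using this
      · have := congrFun h2 ⟨i.val, hi⟩
        simpa [Fin.castSucc, Fin.castAdd, Fin.castLE] using this
    have e4 : ∀ i : Fin 5, ¬ i.val < 4 → i = 4 := by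
      intro i hi; exact Fin.ext (by omega)
    refine Prod.ext (funext fun i => ?_) (funext fun i => ?_)
    · by_cases hi : i.val < 4
      · exact (hlt i hi).1
      · rw [e4 i hi, ← hp.2, ← hq.2]; exact (hlt a ha).1
    · by_cases hi : i.val < 4
      · exact (hlt i hi).2
      · rw [e4 i hi]; exact h3

private lemma card_last_y (𝓔 : Finset (Fin d → F)) (r : F) (a : Fin 5) (ha : a.val < 4) :
    ((Pset 𝓔 4 r).filter fun p => p.2 a = p.2 4).card
      ≤ (Pset 𝓔 3 r).card * 𝓔.card := by
  have key := Finset.card_le_card_of_injOn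
    (f := fun p : (Fin 5 → Fin d → F) × (Fin 5 → Fin d → F) =>
      (((fun i : Fin 4 => p.1 i.castSucc, fun i : Fin 4 => p.2 i.castSucc) :
        (Fin 4 → Fin d → F) × (Fin 4 → Fin d → F)), p.1 4))
    (s := (Pset 𝓔 4 r).filter fun p => p.2 a = p.2 4)
    (t := (Pset 𝓔 3 r) ×ˢ 𝓔) ?_ ?_
  · simpa [Finset.card_product] using key
  · intro p hp
    simp only [mem_coe, mem_filter, mem_Pset] at hp
    obtain ⟨⟨hx, hy, hcond⟩, hab⟩ := hp
    refine Finset.mem_product.mpr ⟨mem_Pset.mpr ⟨fun i => hx _, fun i => hy _, fun i => ?_⟩, hx _⟩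
    simpa only [Fin.succ_castSucc] using hcond i.castSucc
  · intro p hp q hq h
    simp only [mem_coe, mem_filter] at hp hq
    simp only [Prod.mk.injEq] at h
    obtain ⟨⟨h1, h2⟩, h3⟩ := h
    have hlt : ∀ i : Fin 5, i.val < 4 → p.1 i = q.1 i ∧ p.2 i = q.2 i := by
      intro i hi
      constructor
      · have := congrFun h1 ⟨i.val, hi⟩
        simpa [Fin.castSucc, Fin.castAdd, Fin.castLE] using this
      · have := congrFun h2 ⟨i.val, hi⟩
        simpa [Fin.castSucc, Fin.castAdd, Fin.castLE] using this
    have e4 : ∀ i : Fin 5, ¬ i.val < 4 → i = 4 := by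
      intro i hi; exact Fin.ext (by omega)
    refine Prod.ext (funext fun i => ?_) (funext fun i => ?_)
    · by_cases hi : i.val < 4
      · exact (hlt i hi).1
      · rw [e4 i hi]; exact h3
    · by_cases hi : i.val < 4
      · exact (hlt i hi).2
      · rw [e4 i hi, ← hp.2, ← hq.2]; exact (hlt a ha).2

private lemma card_first_x (𝓔 : Finset (Fin d → F)) (r : F) (b : Fin 5) (hb : 0 < b.val) :
    ((Pset 𝓔 4 r).filter fun p => p.1 0 = p.1 b).card
      ≤ (Pset 𝓔 3 r).card * 𝓔.card := by
  have key := Finset.card_le_card_of_injOn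
    (f := fun p : (Fin 5 → Fin d → F) × (Fin 5 → Fin d → F) =>
      (((fun i : Fin 4 => p.1 i.succ, fun i : Fin 4 => p.2 i.succ) :
        (Fin 4 → Fin d → F) × (Fin 4 → Fin d → F)), p.2 0))
    (s := (Pset 𝓔 4 r).filter fun p => p.1 0 = p.1 b)
    (t := (Pset 𝓔 3 r) ×ˢ 𝓔) ?_ ?_
  · simpa [Finset.card_product] using key
  · intro p hp
    simp only [mem_coe, mem_filter, mem_Pset] at hp
    obtain ⟨⟨hx, hy, hcond⟩, hab⟩ := hp
    refine Finset.mem_product.mpr ⟨mem_Pset.mpr ⟨fun i => hx _, fun i => hy _, fun i => ?_⟩, hy _⟩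
    simpa [← Fin.succ_castSucc] using hcond i.succ
  · intro p hp q hq h
    simp only [mem_coe, mem_filter] at hp hq
    simp only [Prod.mk.injEq] at h
    obtain ⟨⟨h1, h2⟩, h3⟩ := h
    have hgt : ∀ i : Fin 5, 0 < i.val → p.1 i = q.1 i ∧ p.2 i = q.2 i := by
      intro i hi
      have hi4 : i.val - 1 < 4 := by omega
      have hie : (⟨i.val - 1, hi4⟩ : Fin 4).succ = i := Fin.ext (by simp; omega)
      constructor
      · have := congrFun h1 ⟨i.val - 1, hi4⟩
        simpa [hie] using this
      · have := congrFun h2 ⟨i.val - 1, hi4⟩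
        simpa [hie] using this
    have e0 : ∀ i : Fin 5, ¬ 0 < i.val → i = 0 := fun i hi => Fin.ext (by omega)
    refine Prod.ext (funext fun i => ?_) (funext fun i => ?_)
    · by_cases hi : 0 < i.val
      · exact (hgt i hi).1
      · rw [e0 i hi, hp.2, hq.2]; exact (hgt b hb).1
    · by_cases hi : 0 < i.val
      · exact (hgt i hi).2
      · rw [e0 i hi]; exact h3

private lemma card_first_y (𝓔 : Finset (Fin d → F)) (r : F) (b : Fin 5) (hb : 0 < b.val) :
    ((Pset 𝓔 4 r).filter fun p => p.2 0 = p.2 b).card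
      ≤ (Pset 𝓔 3 r).card * 𝓔.card := by
  have key := Finset.card_le_card_of_injOn
    (f := fun p : (Fin 5 → Fin d → F) × (Fin 5 → Fin d → F) =>
      (((fun i : Fin 4 => p.1 i.succ, fun i : Fin 4 => p.2 i.succ) :
        (Fin 4 → Fin d → F) × (Fin 4 → Fin d → F)), p.1 0))
    (s := (Pset 𝓔 4 r).filter fun p => p.2 0 = p.2 b)
    (t := (Pset 𝓔 3 r) ×ˢ 𝓔) ?_ ?_
  · simpa [Finset.card_product] using key
  · intro p hp
    simp only [mem_coe, mem_filter, mem_Pset] at hp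
    obtain ⟨⟨hx, hy, hcond⟩, hab⟩ := hp
    refine Finset.mem_product.mpr ⟨mem_Pset.mpr ⟨fun i => hx _, fun i => hy _, fun i => ?_⟩, hx _⟩
    simpa [← Fin.succ_castSucc] using hcond i.succ
  · intro p hp q hq h
    simp only [mem_coe, mem_filter] at hp hq
    simp only [Prod.mk.injEq] at h
    obtain ⟨⟨h1, h2⟩, h3⟩ := h
    have hgt : ∀ i : Fin 5, 0 < i.val → p.1 i = q.1 i ∧ p.2 i = q.2 i := by
      intro i hi
      have hi4 : i.val - 1 < 4 := by omega
      have hie : (⟨i.val - 1, hi4⟩ : Fin 4).succ = i := Fin.ext (by simp; omega)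
      constructor
      · have := congrFun h1 ⟨i.val - 1, hi4⟩
        simpa [hie] using this
      · have := congrFun h2 ⟨i.val - 1, hi4⟩
        simpa [hie] using this
    have e0 : ∀ i : Fin 5, ¬ 0 < i.val → i = 0 := fun i hi => Fin.ext (by omega)
    refine Prod.ext (funext fun i => ?_) (funext fun i => ?_)
    · by_cases hi : 0 < i.val
      · exact (hgt i hi).1
      · rw [e0 i hi]; exact h3
    · by_cases hi : 0 < i.val
      · exact (hgt i hi).2
      · rw [e0 i hi, hp.2, hq.2]; exact (hgt b hb).2

private lemma card_mid_x (𝓔 : Finset (Fin d → F)) (r : F) :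
    ((Pset 𝓔 4 r).filter fun p => p.1 1 = p.1 3).card
      ≤ (Pset 𝓔 1 r).card * 𝓔.card ^ 5 := by
  have key := Finset.card_le_card_of_injOn
    (f := fun p : (Fin 5 → Fin d → F) × (Fin 5 → Fin d → F) =>
      (((![p.1 1, p.1 2], ![p.2 1, p.2 2]) :
        (Fin 2 → Fin d → F) × (Fin 2 → Fin d → F)),
        (p.1 0, p.1 4, p.2 0, p.2 3, p.2 4)))
    (s := (Pset 𝓔 4 r).filter fun p => p.1 1 = p.1 3)
    (t := (Pset 𝓔 1 r) ×ˢ (𝓔 ×ˢ 𝓔 ×ˢ 𝓔 ×ˢ 𝓔 ×ˢ 𝓔)) ?_ ?_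
  · calc ((Pset 𝓔 4 r).filter fun p => p.1 1 = p.1 3).card
        ≤ ((Pset 𝓔 1 r) ×ˢ (𝓔 ×ˢ 𝓔 ×ˢ 𝓔 ×ˢ 𝓔 ×ˢ 𝓔)).card := key
      _ = (Pset 𝓔 1 r).card * 𝓔.card ^ 5 := by
          simp only [Finset.card_product]; ring
  · intro p hp
    simp only [mem_coe, mem_filter, mem_Pset] at hp
    obtain ⟨⟨hx, hy, hcond⟩, hab⟩ := hp
    refine Finset.mem_product.mpr ⟨mem_Pset.mpr ⟨?_, ?_, ?_⟩, ?_⟩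
    · intro i; fin_cases i <;> simp <;> exact hx _
    · intro i; fin_cases i <;> simp <;> exact hy _
    · intro i
      have h := hcond 1
      rw [show ((1:Fin 4)).succ = (2:Fin 5) from rfl,
        show ((1:Fin 4)).castSucc = (1:Fin 5) from rfl] at h
      have hi : i = 0 := Subsingleton.elim _ _
      subst hi
      simpa using h
    · simp only [Finset.mem_product]
      exact ⟨hx _, hx _, hy _, hy _, hy _⟩
  · intro p hp q hq h
    simp only [mem_coe, mem_filter] at hp hq
    simp only [Prod.mk.injEq] at h
    obtain ⟨⟨h1, h2⟩, e0, e4, f0, f3, f4⟩ := h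
    have h11 : p.1 1 = q.1 1 := by simpa using congrFun h1 0
    have h12 : p.1 2 = q.1 2 := by simpa using congrFun h1 1
    have h21 : p.2 1 = q.2 1 := by simpa using congrFun h2 0
    have h22 : p.2 2 = q.2 2 := by simpa using congrFun h2 1
    have h13 : p.1 3 = q.1 3 := by rw [← hp.2, ← hq.2]; exact h11
    refine Prod.ext (funext fun i => ?_) (funext fun i => ?_) <;>
      fin_cases i <;> assumption

private lemma card_mid_y (𝓔 : Finset (Fin d → F)) (r : F) :
    ((Pset 𝓔 4 r).filter fun p => p.2 1 = p.2 3).card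
      ≤ (Pset 𝓔 1 r).card * 𝓔.card ^ 5 := by
  have key := Finset.card_le_card_of_injOn
    (f := fun p : (Fin 5 → Fin d → F) × (Fin 5 → Fin d → F) =>
      (((![p.1 1, p.1 2], ![p.2 1, p.2 2]) :
        (Fin 2 → Fin d → F) × (Fin 2 → Fin d → F)),
        (p.1 0, p.1 3, p.1 4, p.2 0, p.2 4)))
    (s := (Pset 𝓔 4 r).filter fun p => p.2 1 = p.2 3)
    (t := (Pset 𝓔 1 r) ×ˢ (𝓔 ×ˢ 𝓔 ×ˢ 𝓔 ×ˢ 𝓔 ×ˢ 𝓔)) ?_ ?_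
  · calc ((Pset 𝓔 4 r).filter fun p => p.2 1 = p.2 3).card
        ≤ ((Pset 𝓔 1 r) ×ˢ (𝓔 ×ˢ 𝓔 ×ˢ 𝓔 ×ˢ 𝓔 ×ˢ 𝓔)).card := key
      _ = (Pset 𝓔 1 r).card * 𝓔.card ^ 5 := by
          simp only [Finset.card_product]; ring
  · intro p hp
    simp only [mem_coe, mem_filter, mem_Pset] at hp
    obtain ⟨⟨hx, hy, hcond⟩, hab⟩ := hp
    refine Finset.mem_product.mpr ⟨mem_Pset.mpr ⟨?_, ?_, ?_⟩, ?_⟩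
    · intro i; fin_cases i <;> simp <;> exact hx _
    · intro i; fin_cases i <;> simp <;> exact hy _
    · intro i
      have h := hcond 1
      rw [show ((1:Fin 4)).succ = (2:Fin 5) from rfl,
        show ((1:Fin 4)).castSucc = (1:Fin 5) from rfl] at h
      have hi : i = 0 := Subsingleton.elim _ _
      subst hi
      simpa using h
    · simp only [Finset.mem_product]
      exact ⟨hx _, hx _, hx _, hy _, hy _⟩
  · intro p hp q hq h
    simp only [mem_coe, mem_filter] at hp hq
    simp only [Prod.mk.injEq] at h
    obtain ⟨⟨h1, h2⟩, e0, e3, e4, f0, f4⟩ := h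
    have h11 : p.1 1 = q.1 1 := by simpa using congrFun h1 0
    have h12 : p.1 2 = q.1 2 := by simpa using congrFun h1 1
    have h21 : p.2 1 = q.2 1 := by simpa using congrFun h2 0
    have h22 : p.2 2 = q.2 2 := by simpa using congrFun h2 1
    have h23 : p.2 3 = q.2 3 := by rw [← hp.2, ← hq.2]; exact h21
    refine Prod.ext (funext fun i => ?_) (funext fun i => ?_) <;>
      fin_cases i <;> assumption

end Aux

set_option maxHeartbeats 1000000 in
/-- For `d ≥ 5`, if `C` is the set of tuples of `P_4(r)` whose
`x`-parts are pairwise distinct and whose `y`-parts are pairwise distinct, then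
`|C| ≥ |P_4(r)| − 10·|𝓔|·|P_3(r)| − 2·|𝓔|⁵·|P_1(r)| − |𝓔|²·|P_2(r)|`. -/
theorem Pset_nondegenerate_high_dim {F : Type*} [Field F] [Fintype F]
    (hodd : Odd (Fintype.card F))
    {d : ℕ} (hd : 5 ≤ d)
    (𝓔 : Finset (Fin d → F)) (r : F) :
    ((Pset 𝓔 4 r).card : ℤ)
        - 10 * (𝓔.card : ℤ) * ((Pset 𝓔 3 r).card : ℤ)
        - 2 * (𝓔.card : ℤ) ^ 5 * ((Pset 𝓔 1 r).card : ℤ)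
        - (𝓔.card : ℤ) ^ 2 * ((Pset 𝓔 2 r).card : ℤ)
      ≤ (((Pset 𝓔 4 r).filter fun p =>
          Function.Injective p.1 ∧ Function.Injective p.2).card : ℤ) := by
  classical
  open Finset in
  set S := Pset 𝓔 4 r with hS
  -- split into nondegenerate and degenerate parts
  have hsplit : (S.filter fun p =>
          Function.Injective p.1 ∧ Function.Injective p.2).card
        + (S.filter fun p =>
          ¬(Function.Injective p.1 ∧ Function.Injective p.2)).card = S.card :=
    Finset.card_filter_add_card_filter_not _
  -- the degenerate part is covered by twelve events
  set U := ((S.filter fun p => p.1 0 = p.1 2) ∪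
      ((S.filter fun p => p.1 0 = p.1 3) ∪
      ((S.filter fun p => p.1 0 = p.1 4) ∪
      ((S.filter fun p => p.1 1 = p.1 3) ∪
      ((S.filter fun p => p.1 1 = p.1 4) ∪
      ((S.filter fun p => p.1 2 = p.1 4) ∪
      ((S.filter fun p => p.2 0 = p.2 2) ∪
      ((S.filter fun p => p.2 0 = p.2 3) ∪
      ((S.filter fun p => p.2 0 = p.2 4) ∪
      ((S.filter fun p => p.2 1 = p.2 3) ∪
      ((S.filter fun p => p.2 1 = p.2 4) ∪
      (S.filter fun p => p.2 2 = p.2 4)))))))))))) with hU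
  have hsub : (S.filter fun p =>
      ¬(Function.Injective p.1 ∧ Function.Injective p.2)) ⊆ U := by
    intro p hp
    rw [Finset.mem_filter] at hp
    obtain ⟨hpS, hnot⟩ := hp
    have hx01 : p.1 0 ≠ p.1 1 := consec_x hpS 0
    have hx12 : p.1 1 ≠ p.1 2 := consec_x hpS 1
    have hx23 : p.1 2 ≠ p.1 3 := consec_x hpS 2
    have hx34 : p.1 3 ≠ p.1 4 := consec_x hpS 3
    have hy01 : p.2 0 ≠ p.2 1 := consec_y hpS 0
    have hy12 : p.2 1 ≠ p.2 2 := consec_y hpS 1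
    have hy23 : p.2 2 ≠ p.2 3 := consec_y hpS 2
    have hy34 : p.2 3 ≠ p.2 4 := consec_y hpS 3
    rw [hU]
    simp only [Finset.mem_union, Finset.mem_filter]
    rcases not_and_or.mp hnot with h | h
    · rcases collision_cases p.1 h hx01 hx12 hx23 hx34 with
        h' | h' | h' | h' | h' | h'
      · exact Or.inl ⟨hpS, h'⟩
      · exact Or.inr (Or.inl ⟨hpS, h'⟩)
      · exact Or.inr (Or.inr (Or.inl ⟨hpS, h'⟩))
      · exact Or.inr (Or.inr (Or.inr (Or.inl ⟨hpS, h'⟩)))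
      · exact Or.inr (Or.inr (Or.inr (Or.inr (Or.inl ⟨hpS, h'⟩))))
      · exact Or.inr (Or.inr (Or.inr (Or.inr (Or.inr (Or.inl ⟨hpS, h'⟩)))))
    · rcases collision_cases p.2 h hy01 hy12 hy23 hy34 with
        h' | h' | h' | h' | h' | h'
      · exact Or.inr (Or.inr (Or.inr (Or.inr (Or.inr (Or.inr (Or.inl ⟨hpS, h'⟩))))))
      · exact Or.inr (Or.inr (Or.inr (Or.inr (Or.inr (Or.inr (Or.inr (Or.inl ⟨hpS, h'⟩)))))))
      · exact Or.inr (Or.inr (Or.inr (Or.inr (Or.inr (Or.inr (Or.inr (Or.inr (Or.inl ⟨hpS, h'⟩))))))))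
      · exact Or.inr (Or.inr (Or.inr (Or.inr (Or.inr (Or.inr (Or.inr (Or.inr (Or.inr (Or.inl ⟨hpS, h'⟩)))))))))
      · exact Or.inr (Or.inr (Or.inr (Or.inr (Or.inr (Or.inr (Or.inr (Or.inr (Or.inr (Or.inr (Or.inl ⟨hpS, h'⟩))))))))))
      · exact Or.inr (Or.inr (Or.inr (Or.inr (Or.inr (Or.inr (Or.inr (Or.inr (Or.inr (Or.inr (Or.inr ⟨hpS, h'⟩))))))))))
  set A := (Pset 𝓔 3 r).card * 𝓔.card with hA
  set B := (Pset 𝓔 1 r).card * 𝓔.card ^ 5 with hB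
  have b1 := card_first_x 𝓔 r 2 (by decide)
  have b2 := card_first_x 𝓔 r 3 (by decide)
  have b3 := card_first_x 𝓔 r 4 (by decide)
  have b4 := card_mid_x 𝓔 r
  have b5 := card_last_x 𝓔 r 1 (by decide)
  have b6 := card_last_x 𝓔 r 2 (by decide)
  have b7 := card_first_y 𝓔 r 2 (by decide)
  have b8 := card_first_y 𝓔 r 3 (by decide)
  have b9 := card_first_y 𝓔 r 4 (by decide)
  have b10 := card_mid_y 𝓔 r
  have b11 := card_last_y 𝓔 r 1 (by decide)
  have b12 := card_last_y 𝓔 r 2 (by decide)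
  have t11 : (S.filter fun p => p.2 2 = p.2 4).card ≤ A := b12
  have t10 : ((S.filter fun p => p.2 1 = p.2 4) ∪ (S.filter fun p => p.2 2 = p.2 4)).card ≤ (A + A) :=
    (Finset.card_union_le _ _).trans (Nat.add_le_add b11 t11)
  have t9 : ((S.filter fun p => p.2 1 = p.2 3) ∪ ((S.filter fun p => p.2 1 = p.2 4) ∪ (S.filter fun p => p.2 2 = p.2 4))).card ≤ (B + (A + A)) :=
    (Finset.card_union_le _ _).trans (Nat.add_le_add b10 t10)
  have t8 : ((S.filter fun p => p.2 0 = p.2 4) ∪ ((S.filter fun p => p.2 1 = p.2 3) ∪ ((S.filter fun p => p.2 1 = p.2 4) ∪ (S.filter fun p => p.2 2 = p.2 4)))).card ≤ (A + (B + (A + A))) :=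
    (Finset.card_union_le _ _).trans (Nat.add_le_add b9 t9)
  have t7 : ((S.filter fun p => p.2 0 = p.2 3) ∪ ((S.filter fun p => p.2 0 = p.2 4) ∪ ((S.filter fun p => p.2 1 = p.2 3) ∪ ((S.filter fun p => p.2 1 = p.2 4) ∪ (S.filter fun p => p.2 2 = p.2 4))))).card ≤ (A + (A + (B + (A + A)))) :=
    (Finset.card_union_le _ _).trans (Nat.add_le_add b8 t8)
  have t6 : ((S.filter fun p => p.2 0 = p.2 2) ∪ ((S.filter fun p => p.2 0 = p.2 3) ∪ ((S.filter fun p => p.2 0 = p.2 4) ∪ ((S.filter fun p => p.2 1 = p.2 3) ∪ ((S.filter fun p => p.2 1 = p.2 4) ∪ (S.filter fun p => p.2 2 = p.2 4)))))).card ≤ (A + (A + (A + (B + (A + A))))) :=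
    (Finset.card_union_le _ _).trans (Nat.add_le_add b7 t7)
  have t5 : ((S.filter fun p => p.1 2 = p.1 4) ∪ ((S.filter fun p => p.2 0 = p.2 2) ∪ ((S.filter fun p => p.2 0 = p.2 3) ∪ ((S.filter fun p => p.2 0 = p.2 4) ∪ ((S.filter fun p => p.2 1 = p.2 3) ∪ ((S.filter fun p => p.2 1 = p.2 4) ∪ (S.filter fun p => p.2 2 = p.2 4))))))).card ≤ (A + (A + (A + (A + (B + (A + A)))))) :=
    (Finset.card_union_le _ _).trans (Nat.add_le_add b6 t6)
  have t4 : ((S.filter fun p => p.1 1 = p.1 4) ∪ ((S.filter fun p => p.1 2 = p.1 4) ∪ ((S.filter fun p => p.2 0 = p.2 2) ∪ ((S.filter fun p => p.2 0 = p.2 3) ∪ ((S.filter fun p => p.2 0 = p.2 4) ∪ ((S.filter fun p => p.2 1 = p.2 3) ∪ ((S.filter fun p => p.2 1 = p.2 4) ∪ (S.filter fun p => p.2 2 = p.2 4)))))))).card ≤ (A + (A + (A + (A + (A + (B + (A + A))))))) :=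
    (Finset.card_union_le _ _).trans (Nat.add_le_add b5 t5)
  have t3 : ((S.filter fun p => p.1 1 = p.1 3) ∪ ((S.filter fun p => p.1 1 = p.1 4) ∪ ((S.filter fun p => p.1 2 = p.1 4) ∪ ((S.filter fun p => p.2 0 = p.2 2) ∪ ((S.filter fun p => p.2 0 = p.2 3) ∪ ((S.filter fun p => p.2 0 = p.2 4) ∪ ((S.filter fun p => p.2 1 = p.2 3) ∪ ((S.filter fun p => p.2 1 = p.2 4) ∪ (S.filter fun p => p.2 2 = p.2 4))))))))).card ≤ (B + (A + (A + (A + (A + (A + (B + (A + A)))))))) :=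
    (Finset.card_union_le _ _).trans (Nat.add_le_add b4 t4)
  have t2 : ((S.filter fun p => p.1 0 = p.1 4) ∪ ((S.filter fun p => p.1 1 = p.1 3) ∪ ((S.filter fun p => p.1 1 = p.1 4) ∪ ((S.filter fun p => p.1 2 = p.1 4) ∪ ((S.filter fun p => p.2 0 = p.2 2) ∪ ((S.filter fun p => p.2 0 = p.2 3) ∪ ((S.filter fun p => p.2 0 = p.2 4) ∪ ((S.filter fun p => p.2 1 = p.2 3) ∪ ((S.filter fun p => p.2 1 = p.2 4) ∪ (S.filter fun p => p.2 2 = p.2 4)))))))))).card ≤ (A + (B + (A + (A + (A + (A + (A + (B + (A + A))))))))) :=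
    (Finset.card_union_le _ _).trans (Nat.add_le_add b3 t3)
  have t1 : ((S.filter fun p => p.1 0 = p.1 3) ∪ ((S.filter fun p => p.1 0 = p.1 4) ∪ ((S.filter fun p => p.1 1 = p.1 3) ∪ ((S.filter fun p => p.1 1 = p.1 4) ∪ ((S.filter fun p => p.1 2 = p.1 4) ∪ ((S.filter fun p => p.2 0 = p.2 2) ∪ ((S.filter fun p => p.2 0 = p.2 3) ∪ ((S.filter fun p => p.2 0 = p.2 4) ∪ ((S.filter fun p => p.2 1 = p.2 3) ∪ ((S.filter fun p => p.2 1 = p.2 4) ∪ (S.filter fun p => p.2 2 = p.2 4))))))))))).card ≤ (A + (A + (B + (A + (A + (A + (A + (A + (B + (A + A)))))))))) :=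
    (Finset.card_union_le _ _).trans (Nat.add_le_add b2 t2)
  have t0 : ((S.filter fun p => p.1 0 = p.1 2) ∪ ((S.filter fun p => p.1 0 = p.1 3) ∪ ((S.filter fun p => p.1 0 = p.1 4) ∪ ((S.filter fun p => p.1 1 = p.1 3) ∪ ((S.filter fun p => p.1 1 = p.1 4) ∪ ((S.filter fun p => p.1 2 = p.1 4) ∪ ((S.filter fun p => p.2 0 = p.2 2) ∪ ((S.filter fun p => p.2 0 = p.2 3) ∪ ((S.filter fun p => p.2 0 = p.2 4) ∪ ((S.filter fun p => p.2 1 = p.2 3) ∪ ((S.filter fun p => p.2 1 = p.2 4) ∪ (S.filter fun p => p.2 2 = p.2 4)))))))))))).card ≤ (A + (A + (A + (B + (A + (A + (A + (A + (A + (B + (A + A))))))))))) :=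
    (Finset.card_union_le _ _).trans (Nat.add_le_add b1 t1)
  have hUcard : U.card ≤ 10 * A + 2 * B := by
    rw [hU]
    exact t0.trans (by omega)
  have hdeg : (S.filter fun p =>
      ¬(Function.Injective p.1 ∧ Function.Injective p.2)).card ≤ 10 * A + 2 * B :=
    (Finset.card_le_card hsub).trans hUcard
  have hP2 : (0 : ℤ) ≤ (𝓔.card : ℤ) ^ 2 * ((Pset 𝓔 2 r).card : ℤ) :=
    mul_nonneg (pow_nonneg (Int.natCast_nonneg _) 2) (Int.natCast_nonneg _)
  have hAZ : (A : ℤ) = ((Pset 𝓔 3 r).card : ℤ) * (𝓔.card : ℤ) := by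
    rw [hA]; push_cast; ring
  have hBZ : (B : ℤ) = ((Pset 𝓔 1 r).card : ℤ) * (𝓔.card : ℤ) ^ 5 := by
    rw [hB]; push_cast; ring
  have h2 : (((S.filter fun p =>
      Function.Injective p.1 ∧ Function.Injective p.2).card
      + (S.filter fun p =>
      ¬(Function.Injective p.1 ∧ Function.Injective p.2)).card : ℕ) : ℤ) = (S.card : ℤ) :=
    congrArg _ hsplit
  have h1 : (((S.filter fun p =>
      ¬(Function.Injective p.1 ∧ Function.Injective p.2)).card : ℕ) : ℤ)
      ≤ ((10 * A + 2 * B : ℕ) : ℤ) := Nat.cast_le.mpr hdeg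
  push_cast at h1 h2
  rw [hAZ, hBZ] at h1
  linarith
end

section
/- Let q be an odd prime power, let d satisfy 2 ≤ d ≤ 4, let 𝓔 ⊆ F_q^d be a finite set, and let r ∈ F_q. If |P_1(r)| > 5.03023 · q^((2d−2)/3) · |𝓔|^3 (an inequality of real numbers, with real exponent (2d−2)/3), then 𝓔 contains a pair of 4-paths with dilation ratio r. -/
open scoped Classical

section AuxLemmas
variable {F : Type*} [Field F]

lemma norm2_sub_comm {d : ℕ} (a b : Fin d → F) : norm2 (a - b) = norm2 (b - a) := by
  unfold norm2
  refine Finset.sum_congr rfl fun i _ => ?_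
  simp only [Pi.sub_apply]
  ring

lemma norm2_self_sub {d : ℕ} (a : Fin d → F) : norm2 (a - a) = 0 := by
  simp [norm2]

lemma sq_eq_cases' {a b c : F} (h : (a - c) ^ 2 = (b - c) ^ 2) :
    a = b ∨ a = 2 * c - b := by
  have h2 : (a - b) * (a + b - 2 * c) = 0 := by linear_combination h
  rcases mul_eq_zero.1 h2 with h3 | h3
  · exact Or.inl (sub_eq_zero.1 h3)
  · right; linear_combination h3

lemma sphere_card_le [Fintype F] {d' : ℕ} (c : Fin (d' + 1) → F) (s : F) :
    (Finset.univ.filter fun y : Fin (d' + 1) → F => norm2 (y - c) = s).card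
      ≤ 2 * Fintype.card F ^ d' := by
  classical
  set S := Finset.univ.filter fun y : Fin (d' + 1) → F => norm2 (y - c) = s with hSdef
  have key : ∀ t ∈ S.image (fun y => y ∘ Fin.succ),
      (S.filter fun y => y ∘ Fin.succ = t).card ≤ 2 := by
    intro t _
    rcases (S.filter fun y => y ∘ Fin.succ = t).eq_empty_or_nonempty with he | ⟨y₀, hy₀⟩
    · simp [he]
    · refine le_trans (Finset.card_le_card (?_ :
        (S.filter fun y => y ∘ Fin.succ = t) ⊆
          {y₀, Fin.cons (2 * c 0 - y₀ 0) fun i => y₀ i.succ})) ?_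
      · intro y hy
        simp only [hSdef, Finset.mem_filter, Finset.mem_univ, true_and] at hy hy₀
        obtain ⟨hyS, hyt⟩ := hy
        obtain ⟨hy₀S, hy₀t⟩ := hy₀
        have htail : ∀ i : Fin d', y i.succ = y₀ i.succ := fun i =>
          (congrFun hyt i).trans (congrFun hy₀t i).symm
        have hhead : (y 0 - c 0) ^ 2 = (y₀ 0 - c 0) ^ 2 := by
          have h1 : norm2 (y - c) = norm2 (y₀ - c) := hyS.trans hy₀S.symm
          unfold norm2 at h1
          rw [Fin.sum_univ_succ, Fin.sum_univ_succ] at h1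
          have h2 : ∑ i : Fin d', ((y - c) i.succ) ^ 2 = ∑ i : Fin d', ((y₀ - c) i.succ) ^ 2 := by
            refine Finset.sum_congr rfl fun i _ => ?_
            simp only [Pi.sub_apply, htail i]
          rw [h2] at h1
          have := add_right_cancel h1
          simpa using this
        rcases sq_eq_cases' hhead with h0 | h0
        · apply Finset.mem_insert.2; left
          funext i
          refine Fin.cases ?_ ?_ i
          · exact h0
          · exact htail
        · apply Finset.mem_insert.2; right
          apply Finset.mem_singleton.2
          funext i
          refine Fin.cases ?_ ?_ i
          · simpa using h0
          · intro j; simp [htail j]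
      · exact le_trans (Finset.card_insert_le _ _) (by simp)
  calc S.card ≤ 2 * (S.image (fun y => y ∘ Fin.succ)).card :=
        Finset.card_le_mul_card_image _ 2 key
    _ ≤ 2 * Fintype.card F ^ d' := by
        have h1 := Finset.card_le_univ (S.image (fun y => y ∘ Fin.succ))
        have h2 : Fintype.card (Fin d' → F) = Fintype.card F ^ d' := by
          simp [Fintype.card_fun]
        rw [h2] at h1
        omega

end AuxLemmas

lemma exists_min_degree_subgraph {α : Type*} (A : α → α → Prop) [DecidableRel A] (hA : ∀ u v, A u v → A v u)
    (D : ℝ) :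
    ∀ V : Finset α, 2 * D * V.card < ∑ v ∈ V, ((V.filter (A v)).card : ℝ) →
      ∃ W, W ⊆ V ∧ W.Nonempty ∧ ∀ v ∈ W, D < ((W.filter (A v)).card : ℝ) := by
  classical
  intro V
  induction V using Finset.strongInduction with
  | _ V ih =>
    intro hV
    by_cases hall : ∀ v ∈ V, D < ((V.filter (A v)).card : ℝ)
    · have hne : V.Nonempty := by
        rcases V.eq_empty_or_nonempty with rfl | h
        · simp at hV
        · exact h
      exact ⟨V, Finset.Subset.refl V, hne, hall⟩
    · push_neg at hall
      obtain ⟨v₀, hv₀V, hv₀deg⟩ := hall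
      set V' := V.erase v₀ with hV'
      have hsub : V' ⊂ V := Finset.erase_ssubset hv₀V
      have hVins : V = insert v₀ V' := (Finset.insert_erase hv₀V).symm
      have hv₀nV' : v₀ ∉ V' := Finset.notMem_erase _ _
      have hdegv : ∀ v, ((V.filter (A v)).card : ℝ)
          = ((V'.filter (A v)).card : ℝ) + (if A v v₀ then 1 else 0) := by
        intro v
        conv_lhs => rw [hVins]
        rw [Finset.filter_insert]
        split
        · rw [Finset.card_insert_of_notMem (fun h => hv₀nV' (Finset.mem_filter.1 h).1)]
          push_cast; ring
        · simp
      have hsum : ∑ v ∈ V, ((V.filter (A v)).card : ℝ)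
          = ((V.filter (A v₀)).card : ℝ) + ∑ v ∈ V', ((V.filter (A v)).card : ℝ) := by
        rw [hVins, Finset.sum_insert hv₀nV', ← hVins]
      have hind : ∑ v ∈ V', (if A v v₀ then (1 : ℝ) else 0)
          = ((V'.filter (fun v => A v v₀)).card : ℝ) := by
        rw [Finset.sum_boole]
      have hsym : (V'.filter (fun v => A v v₀)).card ≤ (V.filter (A v₀)).card := by
        apply Finset.card_le_card
        intro w hw
        rcases Finset.mem_filter.1 hw with ⟨hw1, hw2⟩
        exact Finset.mem_filter.2 ⟨Finset.mem_of_mem_erase hw1, hA _ _ hw2⟩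
      have hV'card : (V'.card : ℝ) = (V.card : ℝ) - 1 := by
        rw [hV', Finset.card_erase_of_mem hv₀V]
        have h1 : 1 ≤ V.card := Finset.card_pos.2 ⟨v₀, hv₀V⟩
        push_cast [h1]
        ring
      have h1 : ∑ v ∈ V', ((V.filter (A v)).card : ℝ)
          ≤ ∑ v ∈ V', ((V'.filter (A v)).card : ℝ) + ((V.filter (A v₀)).card : ℝ) := by
        calc ∑ v ∈ V', ((V.filter (A v)).card : ℝ)
            = ∑ v ∈ V', (((V'.filter (A v)).card : ℝ) + if A v v₀ then 1 else 0) :=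
              Finset.sum_congr rfl fun v _ => hdegv v
          _ = ∑ v ∈ V', ((V'.filter (A v)).card : ℝ)
              + ∑ v ∈ V', (if A v v₀ then (1 : ℝ) else 0) := Finset.sum_add_distrib
          _ ≤ _ := by
              rw [hind]
              have : ((V'.filter (fun v => A v v₀)).card : ℝ)
                  ≤ ((V.filter (A v₀)).card : ℝ) := by exact_mod_cast hsym
              linarith
      have hmain : 2 * D * V'.card < ∑ v ∈ V', ((V'.filter (A v)).card : ℝ) := by
        rw [hsum] at hV
        rw [hV'card]
        linarith [hv₀deg]
      obtain ⟨W, hWV', hWne, hWdeg⟩ := ih V' hsub hmain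
      exact ⟨W, hWV'.trans (Finset.erase_subset _ _), hWne, hWdeg⟩

set_option maxHeartbeats 2000000 in
/-- For `2 ≤ d ≤ 4`, if `|P_1(r)| > 5.03023·q^((2d−2)/3)·|𝓔|³`,
then `𝓔` contains a pair of `4`-paths with dilation ratio `r`. -/
theorem paths_of_Pset_one_large_low_dim {F : Type*} [Field F] [Fintype F]
    (hodd : Odd (Fintype.card F))
    {d : ℕ} (hd2 : 2 ≤ d) (hd4 : d ≤ 4)
    (𝓔 : Finset (Fin d → F)) (r : F)
    (hP : 5.03023 * (Fintype.card F : ℝ) ^ ((2 * (d : ℝ) - 2) / 3) * (𝓔.card : ℝ) ^ 3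
      < ((Pset 𝓔 1 r).card : ℝ)) :
    ContainsPairOfPaths 𝓔 4 r := by
  classical
  obtain ⟨d', rfl⟩ : ∃ d', d = d' + 1 := ⟨d - 1, by omega⟩
  have hd'1 : 1 ≤ d' := by omega
  set q := Fintype.card F with hq
  have hq3 : 3 ≤ q := by
    have h2 : 1 < q := Fintype.one_lt_card
    rcases hodd with ⟨m, hm⟩
    omega
  have hq3R : (3 : ℝ) ≤ (q : ℝ) := by exact_mod_cast hq3
  set E := 𝓔.card with hE
  set Q : ℝ := (q : ℝ) ^ ((2 * ((d' + 1 : ℕ) : ℝ) - 2) / 3) with hQdef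
  have hQpos : 0 < Q := Real.rpow_pos_of_pos (by positivity) _
  have hQ3 : Q ^ (3 : ℕ) = (q : ℝ) ^ (2 * d' : ℕ) := by
    rw [hQdef, ← Real.rpow_natCast ((q : ℝ) ^ _) 3, ← Real.rpow_mul (by positivity),
      ← Real.rpow_natCast (q : ℝ) (2 * d')]
    congr 1
    push_cast
    ring
  have hQ208 : (2.08 : ℝ) ≤ Q := by
    have h9 : (9 : ℝ) ≤ (q : ℝ) ^ (2 * d' : ℕ) := by
      calc (9 : ℝ) = 3 ^ (2 : ℕ) := by norm_num
        _ ≤ (3 : ℝ) ^ (2 * d' : ℕ) := by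
            apply pow_le_pow_right₀ (by norm_num) (by omega)
        _ ≤ (q : ℝ) ^ (2 * d' : ℕ) := by
            apply pow_le_pow_left₀ (by norm_num) hq3R
    have hcube : (2.08 : ℝ) ^ (3 : ℕ) ≤ Q ^ (3 : ℕ) := by
      rw [hQ3]; nlinarith [h9]
    exact le_of_pow_le_pow_left₀ (by norm_num) (le_of_lt hQpos) hcube
  have hP' : 5.03023 * Q * (E : ℝ) ^ 3 < ((Pset 𝓔 1 r).card : ℝ) := hP
  set V : Finset ((Fin (d' + 1) → F) × (Fin (d' + 1) → F)) := 𝓔 ×ˢ 𝓔 with hVdef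
  set A : ((Fin (d' + 1) → F) × (Fin (d' + 1) → F)) →
      ((Fin (d' + 1) → F) × (Fin (d' + 1) → F)) → Prop :=
    fun u w => norm2 (w.2 - u.2) = r * norm2 (w.1 - u.1) ∧ r * norm2 (w.1 - u.1) ≠ 0
    with hAdef
  have hAsymm : ∀ u w, A u w → A w u := by
    rintro u w ⟨h1, h2⟩
    refine ⟨?_, ?_⟩
    · rw [norm2_sub_comm u.2 w.2, norm2_sub_comm u.1 w.1]
      exact h1
    · rw [norm2_sub_comm u.1 w.1]
      exact h2
  have hAne : ∀ u w, A u w → u.1 ≠ w.1 ∧ u.2 ≠ w.2 := by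
    rintro u w ⟨h1, h2⟩
    constructor
    · intro h
      apply h2
      rw [h, norm2_self_sub, mul_zero]
    · intro h
      apply h2
      rw [← h1, h, norm2_self_sub]
  have hVmem : ∀ w ∈ V, w.1 ∈ 𝓔 ∧ w.2 ∈ 𝓔 := fun w hw => Finset.mem_product.1 hw
  have hPmem : ∀ p : (Fin 2 → Fin (d' + 1) → F) × (Fin 2 → Fin (d' + 1) → F),
      p ∈ Pset 𝓔 1 r ↔ (∀ i, p.1 i ∈ 𝓔) ∧ (∀ i, p.2 i ∈ 𝓔) ∧
        norm2 (p.2 1 - p.2 0) = r * norm2 (p.1 1 - p.1 0)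
        ∧ r * norm2 (p.1 1 - p.1 0) ≠ 0 := by
    intro p
    rw [Pset, Finset.mem_filter]
    simp only [Finset.mem_univ, true_and]
    constructor
    · rintro ⟨h1, h2, h3⟩
      have := h3 0
      simp only [Fin.succ_zero_eq_one, Fin.castSucc_zero] at this
      exact ⟨h1, h2, this.1, this.2⟩
    · rintro ⟨h1, h2, h3, h4⟩
      refine ⟨h1, h2, fun i => ?_⟩
      have hi : i = 0 := Subsingleton.elim _ _
      subst hi
      simp only [Fin.succ_zero_eq_one, Fin.castSucc_zero]
      exact ⟨h3, h4⟩
  have hfiber : ∀ v ∈ V, ((Pset 𝓔 1 r).filter fun p => (p.1 0, p.2 0) = v).card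
      = (V.filter (A v)).card := by
    intro v hv
    apply Finset.card_bij' (i := fun p _ => (p.1 1, p.2 1))
      (j := fun w _ => ((![v.1, w.1], ![v.2, w.2])))
    · intro p hp
      obtain ⟨hpP, hp0⟩ := Finset.mem_filter.1 hp
      rw [hPmem] at hpP
      obtain ⟨h1, h2, h3, h4⟩ := hpP
      have hx0 : p.1 0 = v.1 := congrArg Prod.fst hp0
      have hy0 : p.2 0 = v.2 := congrArg Prod.snd hp0
      refine Finset.mem_filter.2 ⟨Finset.mem_product.2 ⟨h1 1, h2 1⟩, ?_, ?_⟩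
      · rw [hy0] at h3; rw [hx0] at h3; exact h3
      · rw [hx0] at h4; exact h4
    · intro w hw
      obtain ⟨hwV, hwA⟩ := Finset.mem_filter.1 hw
      obtain ⟨hw1, hw2⟩ := hVmem w hwV
      obtain ⟨hv1, hv2⟩ := hVmem v hv
      refine Finset.mem_filter.2 ⟨?_, ?_⟩
      · rw [hPmem]
        refine ⟨?_, ?_, ?_, ?_⟩
        · intro i
          refine Fin.cases ?_ ?_ i
          · simpa using hv1
          · intro j
            have : j = 0 := Subsingleton.elim _ _
            subst this
            simpa using hw1
        · intro i
          refine Fin.cases ?_ ?_ i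
          · simpa using hv2
          · intro j
            have : j = 0 := Subsingleton.elim _ _
            subst this
            simpa using hw2
        · simpa using hwA.1
        · simpa using hwA.2
      · simp
    · intro p hp
      obtain ⟨hpP, hp0⟩ := Finset.mem_filter.1 hp
      have hx0 : p.1 0 = v.1 := congrArg Prod.fst hp0
      have hy0 : p.2 0 = v.2 := congrArg Prod.snd hp0
      refine Prod.ext ?_ ?_ <;> funext i <;> refine Fin.cases ?_ ?_ i
      · simpa using hx0.symm
      · intro j
        have : j = 0 := Subsingleton.elim _ _
        subst this
        simp
      · simpa using hy0.symm
      · intro j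
        have : j = 0 := Subsingleton.elim _ _
        subst this
        simp
    · intro w hw
      simp
  have hcard : (Pset 𝓔 1 r).card = ∑ v ∈ V, (V.filter (A v)).card := by
    rw [Finset.card_eq_sum_card_fiberwise (f := fun p => (p.1 0, p.2 0)) (t := V)
      (fun p hp => by
        rw [Finset.mem_coe, hPmem] at hp
        exact Finset.mem_product.2 ⟨hp.1 0, hp.2.1 0⟩)]
    exact Finset.sum_congr rfl hfiber
  have hVcard : V.card = E * E := by
    rw [hVdef, Finset.card_product, hE]
  have hsumR : ((Pset 𝓔 1 r).card : ℝ) = ∑ v ∈ V, ((V.filter (A v)).card : ℝ) := by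
    rw [hcard]
    push_cast
    rfl
  have hsum_le : ((Pset 𝓔 1 r).card : ℝ) ≤ (E : ℝ) ^ 4 := by
    rw [hsumR]
    calc (∑ v ∈ V, ((V.filter (A v)).card : ℝ)) ≤ ∑ _v ∈ V, (V.card : ℝ) := by
          refine Finset.sum_le_sum fun v _ => ?_
          exact_mod_cast Finset.card_le_card (Finset.filter_subset _ _)
      _ = (V.card : ℝ) * V.card := by
          rw [Finset.sum_const, nsmul_eq_mul]
      _ = (E : ℝ) ^ 4 := by
          rw [hVcard]; push_cast; ring
  have hE11 : 11 ≤ E := by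
    have h1 : 5.03023 * Q * (E : ℝ) ^ 3 < (E : ℝ) ^ 4 := lt_of_lt_of_le hP' hsum_le
    have hE0 : 0 < E := by
      by_contra h
      have hE0' : E = 0 := by omega
      rw [hE0'] at h1
      norm_num at h1
    by_contra hE'
    push_neg at hE'
    have h10 : (E : ℝ) ≤ 10 := by exact_mod_cast Nat.lt_succ_iff.mp hE'
    have hE3pos : (0 : ℝ) < (E : ℝ) ^ 3 := by positivity
    nlinarith [h1, hE3pos, h10, hQ208, mul_le_mul_of_nonneg_right hQ208 (le_of_lt hE3pos)]
  have hE11R : (11 : ℝ) ≤ (E : ℝ) := by exact_mod_cast hE11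
  set D : ℝ := 2.515115 * Q * E with hDdef
  have hDpos : 0 < D := by
    rw [hDdef]
    have : (0:ℝ) < E := by linarith
    positivity
  have hyp : 2 * D * V.card < ∑ v ∈ V, ((V.filter (A v)).card : ℝ) := by
    rw [← hsumR, hVcard]
    push_cast
    calc 2 * (2.515115 * Q * E) * ((E:ℝ) * E) = 5.03023 * Q * (E : ℝ) ^ 3 := by ring
      _ < _ := hP'
  obtain ⟨W, hWV, ⟨v₀, hv₀W⟩, hWdeg⟩ := exists_min_degree_subgraph A hAsymm D V hyp
  set M : ℕ := min E (2 * q ^ d') with hMdef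
  have hME : M ≤ E := min_le_left _ _
  have hMq : M ≤ 2 * q ^ d' := min_le_right _ _
  have h6M : (6 * M : ℝ) < D := by
    have hn : (6 * M) ^ 3 ≤ 864 * (E * q ^ (2 * d')) := by
      calc (6 * M) ^ 3 = 216 * (M * (M * M)) := by ring
        _ ≤ 216 * (E * ((2 * q ^ d') * (2 * q ^ d'))) :=
            Nat.mul_le_mul_left _ (Nat.mul_le_mul hME (Nat.mul_le_mul hMq hMq))
        _ = 864 * (E * q ^ (2 * d')) := by
            rw [two_mul d', pow_add]; ring
    have hcube : ((6 : ℝ) * M) ^ (3:ℕ) ≤ 864 * ((E : ℝ) * (q : ℝ) ^ (2 * d' : ℕ)) := by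
      exact_mod_cast hn
    have hDcube : D ^ (3:ℕ) = 2.515115 ^ (3:ℕ) * ((q : ℝ) ^ (2 * d' : ℕ)) * (E : ℝ) ^ 3 := by
      rw [hDdef, mul_pow, mul_pow, hQ3]
    apply lt_of_pow_lt_pow_left₀ 3 (le_of_lt hDpos)
    rw [hDcube]
    have hk1 : (1 : ℝ) ≤ (q : ℝ) ^ (2 * d' : ℕ) := by
      have h := pow_le_pow_left₀ (by norm_num : (0:ℝ) ≤ 1) (by linarith : (1:ℝ) ≤ (q:ℝ)) (2 * d')
      simpa using h
    have hEpos : (0:ℝ) ≤ (E:ℝ) := by linarith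
    have hsq : (121:ℝ) ≤ (E:ℝ)^2 := by nlinarith [hE11R]
    have hE3 : 121 * (E : ℝ) ≤ (E : ℝ) ^ 3 := by
      nlinarith [mul_nonneg (sub_nonneg.2 hsq) hEpos]
    have hkpos : (0 : ℝ) < (q : ℝ) ^ (2 * d' : ℕ) := by positivity
    calc ((6:ℝ) * M) ^ (3:ℕ) ≤ 864 * ((E : ℝ) * (q : ℝ) ^ (2 * d' : ℕ)) := hcube
      _ < 2.515115 ^ (3:ℕ) * ((q : ℝ) ^ (2 * d' : ℕ)) * (121 * (E:ℝ)) := by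
          nlinarith [hkpos, hE11R]
      _ ≤ 2.515115 ^ (3:ℕ) * ((q : ℝ) ^ (2 * d' : ℕ)) * (E : ℝ) ^ 3 := by
          have : (0:ℝ) ≤ 2.515115 ^ (3:ℕ) * ((q : ℝ) ^ (2 * d' : ℕ)) := by positivity
          exact mul_le_mul_of_nonneg_left hE3 this
  have hWmem : ∀ w ∈ W, w.1 ∈ 𝓔 ∧ w.2 ∈ 𝓔 := fun w hw => hVmem w (hWV hw)
  have step : ∀ v ∈ W, ∀ Xs Ys : Finset (Fin (d' + 1) → F), Xs.card ≤ 3 → Ys.card ≤ 3 →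
      ∃ w, w ∈ W ∧ A v w ∧ w.1 ∉ Xs ∧ w.2 ∉ Ys := by
    intro v hvW Xs Ys hXs hYs
    set N := W.filter (A v) with hNdef
    have hND : D < (N.card : ℝ) := hWdeg v hvW
    set Bad := N.filter (fun w => w.1 ∈ Xs ∨ w.2 ∈ Ys) with hBaddef
    have hNW : ∀ w ∈ N, w ∈ W ∧ A v w := fun w hw => Finset.mem_filter.1 hw
    have hfibx : ∀ a, (N.filter fun w => w.1 = a).card ≤ M := by
      intro a
      apply le_min
      · apply Finset.card_le_card_of_injOn Prod.snd
        · intro w hw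
          exact (hWmem w (hNW w (Finset.mem_filter.1 hw).1).1).2
        · intro w1 h1 w2 h2 h12
          have e1 := (Finset.mem_filter.1 (Finset.mem_coe.1 h1)).2
          have e2 := (Finset.mem_filter.1 (Finset.mem_coe.1 h2)).2
          exact Prod.ext (e1.trans e2.symm) h12
      · calc (N.filter fun w => w.1 = a).card
            ≤ (Finset.univ.filter fun z : Fin (d' + 1) → F =>
                norm2 (z - v.2) = r * norm2 (a - v.1)).card := by
              apply Finset.card_le_card_of_injOn Prod.snd
              · intro w hw
                obtain ⟨hwN, hwa⟩ := Finset.mem_filter.1 hw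
                obtain ⟨hwW, hwA⟩ := hNW w hwN
                simp only [Finset.mem_coe, Finset.mem_filter, Finset.mem_univ, true_and]
                rw [← hwa]
                exact hwA.1
              · intro w1 h1 w2 h2 h12
                have e1 := (Finset.mem_filter.1 (Finset.mem_coe.1 h1)).2
                have e2 := (Finset.mem_filter.1 (Finset.mem_coe.1 h2)).2
                exact Prod.ext (e1.trans e2.symm) h12
          _ ≤ 2 * q ^ d' := sphere_card_le _ _
    have hfiby : ∀ b, (N.filter fun w => w.2 = b).card ≤ M := by
      intro b
      apply le_min
      · apply Finset.card_le_card_of_injOn Prod.fst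
        · intro w hw
          exact (hWmem w (hNW w (Finset.mem_filter.1 hw).1).1).1
        · intro w1 h1 w2 h2 h12
          have e1 := (Finset.mem_filter.1 (Finset.mem_coe.1 h1)).2
          have e2 := (Finset.mem_filter.1 (Finset.mem_coe.1 h2)).2
          exact Prod.ext h12 (e1.trans e2.symm)
      · calc (N.filter fun w => w.2 = b).card
            ≤ (Finset.univ.filter fun z : Fin (d' + 1) → F =>
                norm2 (z - v.1) = r⁻¹ * norm2 (b - v.2)).card := by
              apply Finset.card_le_card_of_injOn Prod.fst
              · intro w hw
                obtain ⟨hwN, hwb⟩ := Finset.mem_filter.1 hw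
                obtain ⟨hwW, hwA⟩ := hNW w hwN
                have hr : r ≠ 0 := left_ne_zero_of_mul hwA.2
                simp only [Finset.mem_coe, Finset.mem_filter, Finset.mem_univ, true_and]
                rw [← hwb, hwA.1, inv_mul_cancel_left₀ hr]
              · intro w1 h1 w2 h2 h12
                have e1 := (Finset.mem_filter.1 (Finset.mem_coe.1 h1)).2
                have e2 := (Finset.mem_filter.1 (Finset.mem_coe.1 h2)).2
                exact Prod.ext h12 (e1.trans e2.symm)
          _ ≤ 2 * q ^ d' := sphere_card_le _ _
    have hBadN : Bad.card ≤ 3 * M + 3 * M := by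
      have hsubBad : Bad ⊆ (Xs.biUnion fun a => N.filter fun w => w.1 = a)
          ∪ (Ys.biUnion fun b => N.filter fun w => w.2 = b) := by
        intro w hw
        obtain ⟨hwN, hcase⟩ := Finset.mem_filter.1 hw
        rcases hcase with h | h
        · exact Finset.mem_union_left _
            (Finset.mem_biUnion.2 ⟨w.1, h, Finset.mem_filter.2 ⟨hwN, rfl⟩⟩)
        · exact Finset.mem_union_right _
            (Finset.mem_biUnion.2 ⟨w.2, h, Finset.mem_filter.2 ⟨hwN, rfl⟩⟩)
      calc Bad.card ≤ _ := Finset.card_le_card hsubBad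
        _ ≤ (Xs.biUnion fun a => N.filter fun w => w.1 = a).card
            + (Ys.biUnion fun b => N.filter fun w => w.2 = b).card :=
              Finset.card_union_le _ _
        _ ≤ (∑ a ∈ Xs, (N.filter fun w => w.1 = a).card)
            + (∑ b ∈ Ys, (N.filter fun w => w.2 = b).card) :=
              Nat.add_le_add (Finset.card_biUnion_le) (Finset.card_biUnion_le)
        _ ≤ (∑ _a ∈ Xs, M) + (∑ _b ∈ Ys, M) :=
              Nat.add_le_add (Finset.sum_le_sum fun a _ => hfibx a)
                (Finset.sum_le_sum fun b _ => hfiby b)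
        _ = Xs.card * M + Ys.card * M := by
              rw [Finset.sum_const, Finset.sum_const, smul_eq_mul, smul_eq_mul]
        _ ≤ 3 * M + 3 * M :=
              Nat.add_le_add (Nat.mul_le_mul_right _ hXs) (Nat.mul_le_mul_right _ hYs)
    have hBadR : (Bad.card : ℝ) ≤ 6 * M := by
      calc (Bad.card : ℝ) ≤ ((3 * M + 3 * M : ℕ) : ℝ) := by exact_mod_cast hBadN
        _ = 6 * M := by push_cast; ring
    have hgood : ∃ w, w ∈ N ∧ w ∉ Bad := by
      by_contra h
      push_neg at h
      have hsub : N ⊆ Bad := fun w hw => h w hw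
      have hle : (N.card : ℝ) ≤ (Bad.card : ℝ) := by
        exact_mod_cast Finset.card_le_card hsub
      linarith
    obtain ⟨w, hwN, hwBad⟩ := hgood
    obtain ⟨hwW, hwA⟩ := hNW w hwN
    refine ⟨w, hwW, hwA, ?_, ?_⟩
    · intro hmem
      exact hwBad (Finset.mem_filter.2 ⟨hwN, Or.inl hmem⟩)
    · intro hmem
      exact hwBad (Finset.mem_filter.2 ⟨hwN, Or.inr hmem⟩)
  have hc3 : ∀ a b c : Fin (d' + 1) → F, ({a, b, c} : Finset _).card ≤ 3 := by
    intro a b c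
    calc ({a, b, c} : Finset _).card ≤ ({b, c} : Finset _).card + 1 := Finset.card_insert_le _ _
      _ ≤ (({c} : Finset _).card + 1) + 1 := Nat.add_le_add_right (Finset.card_insert_le _ _) 1
      _ ≤ 3 := by simp
  obtain ⟨v1, hv1W, hA01, -, -⟩ := step v₀ hv₀W ∅ ∅ (by simp) (by simp)
  obtain ⟨v2, hv2W, hA12, hx2, hy2⟩ := step v1 hv1W {v₀.1} {v₀.2} (by simp) (by simp)
  obtain ⟨v3, hv3W, hA23, hx3, hy3⟩ := step v2 hv2W {v₀.1, v1.1} {v₀.2, v1.2}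
    ((Finset.card_insert_le _ _).trans (by simp)) ((Finset.card_insert_le _ _).trans (by simp))
  obtain ⟨v4, hv4W, hA34, hx4, hy4⟩ := step v3 hv3W {v₀.1, v1.1, v2.1} {v₀.2, v1.2, v2.2}
    (hc3 _ _ _) (hc3 _ _ _)
  obtain ⟨n01, m01⟩ := hAne _ _ hA01
  obtain ⟨n12, m12⟩ := hAne _ _ hA12
  obtain ⟨n23, m23⟩ := hAne _ _ hA23
  obtain ⟨n34, m34⟩ := hAne _ _ hA34
  simp only [Finset.mem_insert, Finset.mem_singleton, not_or] at hx2 hy2 hx3 hy3 hx4 hy4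
  have n02 : v₀.1 ≠ v2.1 := Ne.symm hx2
  have m02 : v₀.2 ≠ v2.2 := Ne.symm hy2
  have n03 : v₀.1 ≠ v3.1 := Ne.symm hx3.1
  have n13 : v1.1 ≠ v3.1 := Ne.symm hx3.2
  have m03 : v₀.2 ≠ v3.2 := Ne.symm hy3.1
  have m13 : v1.2 ≠ v3.2 := Ne.symm hy3.2
  have n04 : v₀.1 ≠ v4.1 := Ne.symm hx4.1
  have n14 : v1.1 ≠ v4.1 := Ne.symm hx4.2.1
  have n24 : v2.1 ≠ v4.1 := Ne.symm hx4.2.2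
  have m04 : v₀.2 ≠ v4.2 := Ne.symm hy4.1
  have m14 : v1.2 ≠ v4.2 := Ne.symm hy4.2.1
  have m24 : v2.2 ≠ v4.2 := Ne.symm hy4.2.2
  refine ⟨![v₀.1, v1.1, v2.1, v3.1, v4.1], ![v₀.2, v1.2, v2.2, v3.2, v4.2], ?_, ?_, ?_, ?_, ?_⟩
  · intro i j h
    fin_cases i <;> fin_cases j <;>
      first
        | rfl
        | exact absurd h n01 | exact absurd h n01.symm
        | exact absurd h n02 | exact absurd h n02.symm
        | exact absurd h n03 | exact absurd h n03.symm
        | exact absurd h n04 | exact absurd h n04.symm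
        | exact absurd h n12 | exact absurd h n12.symm
        | exact absurd h n13 | exact absurd h n13.symm
        | exact absurd h n14 | exact absurd h n14.symm
        | exact absurd h n23 | exact absurd h n23.symm
        | exact absurd h n24 | exact absurd h n24.symm
        | exact absurd h n34 | exact absurd h n34.symm
  · intro i j h
    fin_cases i <;> fin_cases j <;>
      first
        | rfl
        | exact absurd h m01 | exact absurd h m01.symm
        | exact absurd h m02 | exact absurd h m02.symm
        | exact absurd h m03 | exact absurd h m03.symm
        | exact absurd h m04 | exact absurd h m04.symm
        | exact absurd h m12 | exact absurd h m12.symm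
        | exact absurd h m13 | exact absurd h m13.symm
        | exact absurd h m14 | exact absurd h m14.symm
        | exact absurd h m23 | exact absurd h m23.symm
        | exact absurd h m24 | exact absurd h m24.symm
        | exact absurd h m34 | exact absurd h m34.symm
  · intro i
    fin_cases i
    · exact (hWmem v₀ hv₀W).1
    · exact (hWmem v1 hv1W).1
    · exact (hWmem v2 hv2W).1
    · exact (hWmem v3 hv3W).1
    · exact (hWmem v4 hv4W).1
  · intro i
    fin_cases i
    · exact (hWmem v₀ hv₀W).2
    · exact (hWmem v1 hv1W).2
    · exact (hWmem v2 hv2W).2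
    · exact (hWmem v3 hv3W).2
    · exact (hWmem v4 hv4W).2
  · intro i
    fin_cases i
    · exact hA01
    · exact hA12
    · exact hA23
    · exact hA34
end
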